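/- Let 𝓛 : ℝ^d → ℝ be L-smooth and bounded below by 𝓛⋆. On a probability space with filtration (𝓕_t), let θ^(0) be deterministic and define θ^(t+1) = θ^(t) − η (I + λ I_G^(t)) g_t, where λ ≥ 0, g_t is 𝓕_{t+1}-measurable with E[g_t | 𝓕_t] = ∇𝓛(θ^(t)) and E[‖g_t − ∇𝓛(θ^(t))‖² | 𝓕_t] ≤ σ², and I_G^(t) is an 𝓕_t-measurable symmetric positive semidefinite d×d matrix with ‖I_G^(t)‖_op ≤ G. If 0 < η ≤ 1/(L(1+λG)²), then for every T ≥ 1: (1/T) Σ_{t=0}^{T−1} E[‖∇𝓛(θ^(t))‖²] ≤ 2(𝓛(θ^(0)) − 𝓛⋆)/(ηT) + η·L·(1+λG)²·σ². -/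

import Mathlib

open MeasureTheory
open scoped RealInnerProductSpace

lemma fire_coord_abs_le {d : ℕ} (x : EuclideanSpace ℝ (Fin d)) (i : Fin d) : |x i| ≤ ‖x‖ := by
  have h1 : (x i) ^ 2 ≤ ∑ j, (x j) ^ 2 :=
    Finset.single_le_sum (f := fun j => (x j) ^ 2) (fun j _ => sq_nonneg _) (Finset.mem_univ i)
  have h2 : ‖x‖ = Real.sqrt (∑ j, (x j) ^ 2) := by
    rw [EuclideanSpace.norm_eq]
    congr 1
    exact Finset.sum_congr rfl fun j _ => by rw [Real.norm_eq_abs, sq_abs]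
  rw [h2, ← Real.sqrt_sq_eq_abs]
  exact Real.sqrt_le_sqrt h1

lemma fire_descent {d : ℕ} (𝓛 : EuclideanSpace ℝ (Fin d) → ℝ) (L : ℝ)
    (hdiff : Differentiable ℝ 𝓛)
    (hsmooth : ∀ a b, ‖gradient 𝓛 a - gradient 𝓛 b‖ ≤ L * ‖a - b‖)
    (a v : EuclideanSpace ℝ (Fin d)) :
    𝓛 (a + v) ≤ 𝓛 a + ⟪gradient 𝓛 a, v⟫ + L / 2 * ‖v‖ ^ 2 := by
  have key : ∀ x : EuclideanSpace ℝ (Fin d), fderiv ℝ 𝓛 x v = ⟪gradient 𝓛 x, v⟫ := by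
    intro x
    have h2 := (hdiff x).hasGradientAt.hasFDerivAt
    rw [h2.fderiv]
    exact InnerProductSpace.toDual_apply_apply
  set φ : ℝ → ℝ := fun s => 𝓛 (a + s • v) - s * ⟪gradient 𝓛 a, v⟫ - L / 2 * s ^ 2 * ‖v‖ ^ 2
    with hφdef
  have hline : ∀ s : ℝ, HasDerivAt (fun s : ℝ => a + s • v) v s := by
    intro s
    have := ((hasDerivAt_id s).smul_const v).const_add a
    simpa using this
  have hφ' : ∀ s, HasDerivAt φ
      (⟪gradient 𝓛 (a + s • v), v⟫ - ⟪gradient 𝓛 a, v⟫ - L * s * ‖v‖ ^ 2) s := by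
    intro s
    have h1 : HasDerivAt (fun s : ℝ => 𝓛 (a + s • v)) ⟪gradient 𝓛 (a + s • v), v⟫ s := by
      have := (hdiff (a + s • v)).hasFDerivAt.comp_hasDerivAt s (hline s)
      rwa [key] at this
    have h2 : HasDerivAt (fun s : ℝ => s * ⟪gradient 𝓛 a, v⟫) ⟪gradient 𝓛 a, v⟫ s := by
      simpa using hasDerivAt_mul_const (x := s) ⟪gradient 𝓛 a, v⟫
    have h3 : HasDerivAt (fun s : ℝ => L / 2 * s ^ 2 * ‖v‖ ^ 2) (L * s * ‖v‖ ^ 2) s := by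
      have := ((hasDerivAt_pow 2 s).const_mul (L / 2)).mul_const (‖v‖ ^ 2)
      refine this.congr_deriv ?_
      push_cast
      ring
    exact (h1.sub h2).sub h3
  have hanti : AntitoneOn φ (Set.Ici (0 : ℝ)) := by
    refine antitoneOn_of_deriv_nonpos (convex_Ici 0) ?_ ?_ ?_
    · exact (Differentiable.continuous fun s => (hφ' s).differentiableAt).continuousOn
    · intro s _
      exact (hφ' s).differentiableAt.differentiableWithinAt
    · intro s hs
      rw [interior_Ici] at hs
      have hs0 : (0 : ℝ) < s := hs
      rw [(hφ' s).deriv]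
      have habs : ⟪gradient 𝓛 (a + s • v) - gradient 𝓛 a, v⟫ ≤ L * s * ‖v‖ ^ 2 := by
        calc ⟪gradient 𝓛 (a + s • v) - gradient 𝓛 a, v⟫
            ≤ ‖gradient 𝓛 (a + s • v) - gradient 𝓛 a‖ * ‖v‖ := real_inner_le_norm _ _
          _ ≤ L * ‖a + s • v - a‖ * ‖v‖ :=
              mul_le_mul_of_nonneg_right (hsmooth _ _) (norm_nonneg v)
          _ = L * s * ‖v‖ ^ 2 := by
              rw [add_sub_cancel_left, norm_smul, Real.norm_eq_abs, abs_of_pos hs0]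
              ring
      rw [inner_sub_left] at habs
      linarith
  have h0 : φ 1 ≤ φ 0 := hanti (Set.mem_Ici.2 le_rfl) (Set.mem_Ici.2 zero_le_one) zero_le_one
  have e0 : φ 0 = 𝓛 a := by simp [hφdef]
  have e1 : φ 1 = 𝓛 (a + v) - ⟪gradient 𝓛 a, v⟫ - L / 2 * ‖v‖ ^ 2 := by simp [hφdef]
  rw [e0, e1] at h0
  linarith

lemma fire_ortho {d : ℕ} {Ω : Type*} {m : MeasurableSpace Ω} {m0 : MeasurableSpace Ω}
    (hm : m ≤ m0) (μ : Measure Ω) [IsProbabilityMeasure μ]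
    {X h : Ω → EuclideanSpace ℝ (Fin d)}
    (hX : StronglyMeasurable[m] X)
    (hX2 : Integrable (fun ω => ‖X ω‖ ^ 2) μ)
    (hh : Integrable h μ)
    (hh2 : Integrable (fun ω => ‖h ω‖ ^ 2) μ)
    (hcond : μ[h|m] =ᵐ[μ] 0) :
    ∫ ω, ⟪X ω, h ω⟫ ∂μ = 0 := by
  haveI : SigmaFinite (μ.trim hm) := by infer_instance
  have hXm0 : StronglyMeasurable[m0] X := hX.mono hm
  have hhi : ∀ i : Fin d, Integrable (fun ω => h ω i) μ := by
    intro i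
    have := (EuclideanSpace.proj (𝕜 := ℝ) i).integrable_comp hh
    simpa using this
  have hXi : ∀ i : Fin d, StronglyMeasurable[m] (fun ω => X ω i) := by
    intro i
    have := (EuclideanSpace.proj (𝕜 := ℝ) i).continuous.comp_stronglyMeasurable hX
    simpa using this
  have hint : ∀ i : Fin d, Integrable (fun ω => X ω i * h ω i) μ := by
    intro i
    refine Integrable.mono' ((hX2.add hh2).const_mul (1 / 2)) ?_ ?_
    · exact (((hXi i).mono hm).aestronglyMeasurable).mul (hhi i).1
    · filter_upwards with ω
      have h1 := fire_coord_abs_le (X ω) i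
      have h2 := fire_coord_abs_le (h ω) i
      have h3 : |X ω i * h ω i| ≤ ‖X ω‖ * ‖h ω‖ := by
        rw [abs_mul]
        exact mul_le_mul h1 h2 (abs_nonneg _) (norm_nonneg _)
      rw [Real.norm_eq_abs]
      simp only [Pi.add_apply]
      nlinarith [norm_nonneg (X ω), norm_nonneg (h ω), sq_nonneg (‖X ω‖ - ‖h ω‖)]
  have hinner : ∀ ω, ⟪X ω, h ω⟫ = ∑ i, X ω i * h ω i := by
    intro ω
    simp [PiLp.inner_apply, RCLike.inner_apply, mul_comm]
  calc ∫ ω, ⟪X ω, h ω⟫ ∂μ = ∫ ω, ∑ i, X ω i * h ω i ∂μ := by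
        exact integral_congr_ae (Filter.Eventually.of_forall hinner)
    _ = ∑ i, ∫ ω, X ω i * h ω i ∂μ := integral_finset_sum _ fun i _ => hint i
    _ = 0 := by
      refine Finset.sum_eq_zero fun i _ => ?_
      have hhc : μ[(fun ω => h ω i)|m] =ᵐ[μ] fun _ => (0 : ℝ) := by
        refine (ae_eq_condExp_of_forall_setIntegral_eq (μ := μ)
          (f := fun ω => h ω i) (g := fun _ => (0 : ℝ)) hm (hhi i) ?_ ?_ ?_).symm
        · intro s _ _
          exact (integrable_zero _ _ _).integrableOn
        · intro s hs _
          have h1 : ∫ ω in s, h ω i ∂μ = (EuclideanSpace.proj (𝕜 := ℝ) i) (∫ ω in s, h ω ∂μ) := by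
            rw [← ContinuousLinearMap.integral_comp_comm _ hh.integrableOn]
            simp
          have h2 : ∫ ω in s, h ω ∂μ = 0 := by
            rw [← setIntegral_condExp hm hh hs]
            rw [setIntegral_congr_ae (hm s hs) (hcond.mono fun ω hω _ => hω)]
            simp
          rw [h1, h2]
          simp
        · exact StronglyMeasurable.aestronglyMeasurable stronglyMeasurable_const
      have hfg : (fun ω => X ω i * h ω i) = ((fun ω => X ω i) * fun ω => h ω i) := rfl
      have hmul := condExp_mul_of_stronglyMeasurable_left (μ := μ) (hXi i) (hfg ▸ hint i) (hhi i)
      have hz : μ[(fun ω => X ω i * h ω i)|m] =ᵐ[μ] fun _ => (0 : ℝ) := by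
        rw [hfg]
        filter_upwards [hmul, hhc] with ω h1 h2
        rw [h1]
        simp only [Pi.mul_apply]
        rw [h2, mul_zero]
      rw [← integral_condExp hm (f := fun ω => X ω i * h ω i)]
      rw [integral_congr_ae hz]
      simp

set_option maxHeartbeats 2000000 in
/-- average gradient-norm bound for FIRE preconditioned SGD.
Under the same assumptions as the one-step descent lemma, for every `T ≥ 1`,
`(1/T) Σ_{t<T} E[‖∇𝓛(θ^(t))‖²] ≤ 2(𝓛(θ^(0)) − 𝓛⋆)/(ηT) + ηL(1+λG)²σ²`. -/
theorem fire_average_gradient_bound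
    {d : ℕ} {Ω : Type*} {m0 : MeasurableSpace Ω}
    (μ : Measure Ω) [IsProbabilityMeasure μ] (ℱ : Filtration ℕ m0)
    (𝓛 : EuclideanSpace ℝ (Fin d) → ℝ) (L Lstar : ℝ) (hL : 0 < L)
    (hdiff : Differentiable ℝ 𝓛)
    (hsmooth : ∀ a b, ‖gradient 𝓛 a - gradient 𝓛 b‖ ≤ L * ‖a - b‖)
    (hbdd : ∀ p, Lstar ≤ 𝓛 p)
    (η lam G σ : ℝ) (hlam : 0 ≤ lam) (hG : 0 ≤ G)
    (hη : 0 < η) (hη' : η ≤ 1 / (L * (1 + lam * G) ^ 2))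
    (θ g : ℕ → Ω → EuclideanSpace ℝ (Fin d))
    (IG : ℕ → Ω → (EuclideanSpace ℝ (Fin d) →L[ℝ] EuclideanSpace ℝ (Fin d)))
    (θ0 : EuclideanSpace ℝ (Fin d)) (hθ0 : θ 0 = fun _ => θ0)
    (hupdate : ∀ t ω, θ (t + 1) ω = θ t ω - η • (g t ω + lam • (IG t ω) (g t ω)))
    (hg_meas : ∀ t, StronglyMeasurable[ℱ (t + 1)] (g t))
    (hg_int : ∀ t, Integrable (g t) μ)
    (hmean : ∀ t, μ[g t | ℱ t] =ᵐ[μ] fun ω => gradient 𝓛 (θ t ω))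
    (hvar_int : ∀ t, Integrable (fun ω => ‖g t ω - gradient 𝓛 (θ t ω)‖ ^ 2) μ)
    (hvar : ∀ t, μ[fun ω => ‖g t ω - gradient 𝓛 (θ t ω)‖ ^ 2 | ℱ t]
      ≤ᵐ[μ] fun _ => σ ^ 2)
    (hIG_meas : ∀ t, StronglyMeasurable[ℱ t] (IG t))
    (hIG_symm : ∀ t ω v w, ⟪(IG t ω) v, w⟫ = ⟪v, (IG t ω) w⟫)
    (hIG_psd : ∀ t ω v, 0 ≤ ⟪(IG t ω) v, v⟫)
    (hIG_norm : ∀ t ω, ‖IG t ω‖ ≤ G) :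
    ∀ T : ℕ, 1 ≤ T →
      (1 / (T : ℝ)) * ∑ t ∈ Finset.range T, ∫ ω, ‖gradient 𝓛 (θ t ω)‖ ^ 2 ∂μ
        ≤ 2 * (𝓛 θ0 - Lstar) / (η * T)
          + η * L * (1 + lam * G) ^ 2 * σ ^ 2 := by
  -- notation
  obtain ⟨C, hCdef⟩ : ∃ c : ℝ, c = 1 + lam * G := ⟨_, rfl⟩
  have hC1 : (1 : ℝ) ≤ C := by rw [hCdef]; nlinarith
  have hC0 : (0 : ℝ) < C := lt_of_lt_of_le one_pos hC1
  have hLC2 : (0 : ℝ) < L * C ^ 2 := by positivity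
  have hLC : η * (L * C ^ 2) ≤ 1 := by
    rw [← le_div_iff₀ hLC2, hCdef]
    exact hη'
  -- gradient is continuous
  have hgradc : Continuous (gradient 𝓛) := by
    have hlip : LipschitzWith (Real.toNNReal L) (gradient 𝓛) := by
      apply LipschitzWith.of_dist_le_mul
      intro x y
      rw [dist_eq_norm, dist_eq_norm, Real.coe_toNNReal _ hL.le]
      exact hsmooth x y
    exact hlip.continuous
  -- pointwise preconditioner bound
  have hPle : ∀ t (ω : Ω) (v : EuclideanSpace ℝ (Fin d)),
      ‖v + lam • (IG t ω) v‖ ≤ C * ‖v‖ := by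
    intro t ω v
    have h1 : ‖(IG t ω) v‖ ≤ G * ‖v‖ := by
      calc ‖(IG t ω) v‖ ≤ ‖IG t ω‖ * ‖v‖ := (IG t ω).le_opNorm v
        _ ≤ G * ‖v‖ := mul_le_mul_of_nonneg_right (hIG_norm t ω) (norm_nonneg v)
    calc ‖v + lam • (IG t ω) v‖ ≤ ‖v‖ + ‖lam • (IG t ω) v‖ := norm_add_le _ _
      _ = ‖v‖ + lam * ‖(IG t ω) v‖ := by
          rw [norm_smul, Real.norm_eq_abs, abs_of_nonneg hlam]
      _ ≤ ‖v‖ + lam * (G * ‖v‖) := by nlinarith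
      _ = C * ‖v‖ := by rw [hCdef]; ring
  -- measurability of θ
  have hθmeas : ∀ t, StronglyMeasurable[ℱ t] (θ t) := by
    intro t
    induction t with
    | zero => rw [hθ0]; exact stronglyMeasurable_const
    | succ t ih =>
      have h1 : StronglyMeasurable[ℱ (t + 1)] (θ t) := ih.mono (ℱ.mono (Nat.le_succ t))
      have h3 : StronglyMeasurable[ℱ (t + 1)] (IG t) := (hIG_meas t).mono (ℱ.mono (Nat.le_succ t))
      have h4 : StronglyMeasurable[ℱ (t + 1)] (fun ω => (IG t ω) (g t ω)) :=
        isBoundedBilinearMap_apply.continuous.comp_stronglyMeasurable (h3.prodMk (hg_meas t))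
      have he : θ (t + 1) = fun ω => θ t ω - η • (g t ω + lam • (IG t ω) (g t ω)) :=
        funext (hupdate t)
      rw [he]
      exact h1.sub (((hg_meas t).add (h4.const_smul lam)).const_smul η)
  have hnab : ∀ t, StronglyMeasurable[ℱ t] (fun ω => gradient 𝓛 (θ t ω)) := fun t =>
    hgradc.comp_stronglyMeasurable (hθmeas t)
  have hIGnab : ∀ t, StronglyMeasurable[ℱ t] (fun ω => (IG t ω) (gradient 𝓛 (θ t ω))) := fun t =>
    isBoundedBilinearMap_apply.continuous.comp_stronglyMeasurable ((hIG_meas t).prodMk (hnab t))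
  -- integrability induction
  have hgnormle : ∀ t (ω : Ω), ‖g t ω‖ ≤ ‖g t ω - gradient 𝓛 (θ t ω)‖ + ‖gradient 𝓛 (θ t ω)‖ := by
    intro t ω
    simpa using norm_add_le (g t ω - gradient 𝓛 (θ t ω)) (gradient 𝓛 (θ t ω))
  have hInt : ∀ t, Integrable (fun ω => ‖θ t ω - θ0‖ ^ 2) μ ∧
      Integrable (fun ω => ‖gradient 𝓛 (θ t ω)‖ ^ 2) μ := by
    intro t
    induction t with
    | zero =>
      constructor
      · simp only [hθ0]
        exact integrable_const _
      · simp only [hθ0]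
        exact integrable_const _
    | succ t ih =>
      obtain ⟨ih1, ih2⟩ := ih
      have hg2t : Integrable (fun ω => ‖g t ω‖ ^ 2) μ := by
        refine Integrable.mono' (((hvar_int t).const_mul 2).add (ih2.const_mul 2)) ?_ ?_
        · exact (((hg_meas t).mono (ℱ.le (t + 1))).norm.pow 2).aestronglyMeasurable
        · filter_upwards with ω
          have h1 := hgnormle t ω
          have hsq := pow_le_pow_left₀ (norm_nonneg (g t ω)) h1 2
          rw [Real.norm_eq_abs, abs_of_nonneg (sq_nonneg _)]
          simp only [Pi.add_apply]
          nlinarith [sq_nonneg (‖g t ω - gradient 𝓛 (θ t ω)‖ - ‖gradient 𝓛 (θ t ω)‖)]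
      have hnorm1 : ∀ ω, ‖θ (t + 1) ω - θ0‖ ≤ ‖θ t ω - θ0‖ + η * (C * ‖g t ω‖) := by
        intro ω
        have hPg := hPle t ω (g t ω)
        have e : θ t ω - η • (g t ω + lam • (IG t ω) (g t ω)) - θ0
            = (θ t ω - θ0) - η • (g t ω + lam • (IG t ω) (g t ω)) := by abel
        rw [hupdate t ω, e]
        refine (norm_sub_le _ _).trans ?_
        rw [norm_smul, Real.norm_eq_abs, abs_of_pos hη]
        exact add_le_add_right (mul_le_mul_of_nonneg_left hPg hη.le) _
      have hnorm2 : ∀ ω, ‖gradient 𝓛 (θ (t + 1) ω)‖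
          ≤ ‖gradient 𝓛 (θ t ω)‖ + L * (η * (C * ‖g t ω‖)) := by
        intro ω
        have h1 : ‖gradient 𝓛 (θ (t + 1) ω) - gradient 𝓛 (θ t ω)‖ ≤ L * ‖θ (t + 1) ω - θ t ω‖ :=
          hsmooth _ _
        have h2 : ‖θ (t + 1) ω - θ t ω‖ ≤ η * (C * ‖g t ω‖) := by
          have hPg := hPle t ω (g t ω)
          rw [hupdate t ω, sub_sub_cancel_left, norm_neg, norm_smul, Real.norm_eq_abs,
            abs_of_pos hη]
          exact mul_le_mul_of_nonneg_left hPg hη.le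
        have h3 := norm_sub_norm_le (gradient 𝓛 (θ (t + 1) ω)) (gradient 𝓛 (θ t ω))
        have h4 := mul_le_mul_of_nonneg_left h2 hL.le
        linarith
      constructor
      · refine Integrable.mono' ((ih1.const_mul 2).add (hg2t.const_mul (2 * (η * C) ^ 2))) ?_ ?_
        · exact ((((hθmeas (t + 1)).mono (ℱ.le (t + 1))).sub
            stronglyMeasurable_const).norm.pow 2).aestronglyMeasurable
        · filter_upwards with ω
          have h1 := hnorm1 ω
          have hsq := pow_le_pow_left₀ (norm_nonneg _) h1 2
          rw [Real.norm_eq_abs, abs_of_nonneg (sq_nonneg _)]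
          simp only [Pi.add_apply]
          nlinarith [sq_nonneg (‖θ t ω - θ0‖ - η * (C * ‖g t ω‖))]
      · refine Integrable.mono' ((ih2.const_mul 2).add (hg2t.const_mul (2 * (L * η * C) ^ 2))) ?_ ?_
        · exact ((hgradc.comp_stronglyMeasurable
            ((hθmeas (t + 1)).mono (ℱ.le (t + 1)))).norm.pow 2).aestronglyMeasurable
        · filter_upwards with ω
          have h1 := hnorm2 ω
          have hsq := pow_le_pow_left₀ (norm_nonneg _) h1 2
          rw [Real.norm_eq_abs, abs_of_nonneg (sq_nonneg _)]
          simp only [Pi.add_apply]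
          nlinarith [sq_nonneg (‖gradient 𝓛 (θ t ω)‖ - L * (η * (C * ‖g t ω‖)))]
  -- squared-norm integrability of g
  have hg2 : ∀ t, Integrable (fun ω => ‖g t ω‖ ^ 2) μ := by
    intro t
    refine Integrable.mono' (((hvar_int t).const_mul 2).add (((hInt t).2).const_mul 2)) ?_ ?_
    · exact (((hg_meas t).mono (ℱ.le (t + 1))).norm.pow 2).aestronglyMeasurable
    · filter_upwards with ω
      have h1 := hgnormle t ω
      have hsq := pow_le_pow_left₀ (norm_nonneg (g t ω)) h1 2
      rw [Real.norm_eq_abs, abs_of_nonneg (sq_nonneg _)]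
      simp only [Pi.add_apply]
      nlinarith [sq_nonneg (‖g t ω - gradient 𝓛 (θ t ω)‖ - ‖gradient 𝓛 (θ t ω)‖)]
  -- integrability of the gradient itself
  have hnab1 : ∀ t, Integrable (fun ω => gradient 𝓛 (θ t ω)) μ := by
    intro t
    refine Integrable.mono' ((integrable_const (1:ℝ)).add ((hInt t).2)) ?_ ?_
    · exact ((hnab t).mono (ℱ.le t)).aestronglyMeasurable
    · filter_upwards with ω
      simp only [Pi.add_apply]
      nlinarith [norm_nonneg (gradient 𝓛 (θ t ω)), sq_nonneg (‖gradient 𝓛 (θ t ω)‖ - 1)]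
  -- integrability of the loss values
  have hIL : ∀ t, Integrable (fun ω => 𝓛 (θ t ω)) μ := by
    intro t
    refine Integrable.mono'
      ((((integrable_const (|𝓛 θ0| + |Lstar| + ‖gradient 𝓛 θ0‖)).add
        (((hInt t).1).const_mul (‖gradient 𝓛 θ0‖ + L / 2))))) ?_ ?_
    · exact (hdiff.continuous.comp_stronglyMeasurable
        ((hθmeas t).mono (ℱ.le t))).aestronglyMeasurable
    · filter_upwards with ω
      have hup : 𝓛 (θ t ω) ≤ 𝓛 θ0 + ⟪gradient 𝓛 θ0, θ t ω - θ0⟫ + L / 2 * ‖θ t ω - θ0‖ ^ 2 := by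
        have := fire_descent 𝓛 L hdiff hsmooth θ0 (θ t ω - θ0)
        simpa using this
      have hinle : ⟪gradient 𝓛 θ0, θ t ω - θ0⟫ ≤ ‖gradient 𝓛 θ0‖ * (1 + ‖θ t ω - θ0‖ ^ 2) := by
        have h1 := real_inner_le_norm (gradient 𝓛 θ0) (θ t ω - θ0)
        have h2 : ‖θ t ω - θ0‖ ≤ 1 + ‖θ t ω - θ0‖ ^ 2 := by
          nlinarith [sq_nonneg (‖θ t ω - θ0‖ - 1), norm_nonneg (θ t ω - θ0)]
        nlinarith [norm_nonneg (gradient 𝓛 θ0)]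
      have hlo := hbdd (θ t ω)
      rw [Real.norm_eq_abs]
      simp only [Pi.add_apply]
      rw [abs_le]
      constructor
      · have h0 : (0:ℝ) ≤ ‖θ t ω - θ0‖ ^ 2 := sq_nonneg _
        have h1 : (0:ℝ) ≤ ‖gradient 𝓛 θ0‖ := norm_nonneg _
        have := abs_nonneg (𝓛 θ0)
        have := neg_abs_le Lstar
        nlinarith
      · have h0 : (0:ℝ) ≤ ‖θ t ω - θ0‖ ^ 2 := sq_nonneg _
        have h1 : (0:ℝ) ≤ ‖gradient 𝓛 θ0‖ := norm_nonneg _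
        have := le_abs_self (𝓛 θ0)
        have := abs_nonneg Lstar
        nlinarith
  -- variance integral bound
  have hvarI : ∀ t, ∫ ω, ‖g t ω - gradient 𝓛 (θ t ω)‖ ^ 2 ∂μ ≤ σ ^ 2 := by
    intro t
    haveI : SigmaFinite (μ.trim (ℱ.le t)) := by infer_instance
    rw [← integral_condExp (ℱ.le t) (f := fun ω => ‖g t ω - gradient 𝓛 (θ t ω)‖ ^ 2)]
    calc ∫ ω, (μ[fun ω => ‖g t ω - gradient 𝓛 (θ t ω)‖ ^ 2|ℱ t]) ω ∂μ
        ≤ ∫ (_ : Ω), σ ^ 2 ∂μ := integral_mono_ae integrable_condExp (integrable_const _) (hvar t)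
      _ = σ ^ 2 := by simp [integral_const]
  -- one-step descent in expectation
  have hstep : ∀ t, ∫ ω, 𝓛 (θ (t + 1) ω) ∂μ ≤ ∫ ω, 𝓛 (θ t ω) ∂μ
      - η / 2 * ∫ ω, ‖gradient 𝓛 (θ t ω)‖ ^ 2 ∂μ + η ^ 2 * L * C ^ 2 / 2 * σ ^ 2 := by
    intro t
    -- conditional expectation of the noise vanishes
    have hcond0 : μ[(fun ω => g t ω - gradient 𝓛 (θ t ω))|ℱ t] =ᵐ[μ] 0 := by
      have e : (fun ω => g t ω - gradient 𝓛 (θ t ω))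
          = g t - fun ω => gradient 𝓛 (θ t ω) := rfl
      rw [e]
      have h1 := condExp_sub (μ := μ) (m := ℱ t) (hg_int t) (hnab1 t)
      have h2 := condExp_of_stronglyMeasurable (ℱ.le t) (hnab t) (hnab1 t)
      filter_upwards [h1, hmean t] with ω hω1 hω2
      rw [hω1]
      simp only [Pi.sub_apply, Pi.zero_apply]
      rw [hω2, h2]
      simp
    have hh : Integrable (fun ω => g t ω - gradient 𝓛 (θ t ω)) μ := (hg_int t).sub (hnab1 t)
    -- measurability of the preconditioned gradient
    have hXmeas : StronglyMeasurable[ℱ t]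
        (fun ω => gradient 𝓛 (θ t ω) + lam • (IG t ω) (gradient 𝓛 (θ t ω))) :=
      (hnab t).add ((hIGnab t).const_smul lam)
    have hX2 : Integrable
        (fun ω => ‖gradient 𝓛 (θ t ω) + lam • (IG t ω) (gradient 𝓛 (θ t ω))‖ ^ 2) μ := by
      refine Integrable.mono' (((hInt t).2).const_mul (C ^ 2)) ?_ ?_
      · exact ((hXmeas.mono (ℱ.le t)).norm.pow 2).aestronglyMeasurable
      · filter_upwards with ω
        have h1 := hPle t ω (gradient 𝓛 (θ t ω))
        have hsq := pow_le_pow_left₀ (norm_nonneg _) h1 2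
        rw [Real.norm_eq_abs, abs_of_nonneg (sq_nonneg _)]
        nlinarith
    -- the two orthogonality identities
    have ortho1 : ∫ ω, ⟪gradient 𝓛 (θ t ω), g t ω - gradient 𝓛 (θ t ω)⟫ ∂μ = 0 :=
      fire_ortho (ℱ.le t) μ (hnab t) (hInt t).2 hh (hvar_int t) hcond0
    have ortho2 : ∫ ω, ⟪gradient 𝓛 (θ t ω) + lam • (IG t ω) (gradient 𝓛 (θ t ω)),
        g t ω - gradient 𝓛 (θ t ω)⟫ ∂μ = 0 :=
      fire_ortho (ℱ.le t) μ hXmeas hX2 hh (hvar_int t) hcond0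
    -- scalar integrabilities
    have hPgmeas : StronglyMeasurable[ℱ (t + 1)] (fun ω => g t ω + lam • (IG t ω) (g t ω)) :=
      (hg_meas t).add ((isBoundedBilinearMap_apply.continuous.comp_stronglyMeasurable
        (((hIG_meas t).mono (ℱ.mono (Nat.le_succ t))).prodMk (hg_meas t))).const_smul lam)
    have iPg2 : Integrable (fun ω => ‖g t ω + lam • (IG t ω) (g t ω)‖ ^ 2) μ := by
      refine Integrable.mono' ((hg2 t).const_mul (C ^ 2)) ?_ ?_
      · exact ((hPgmeas.mono (ℱ.le (t + 1))).norm.pow 2).aestronglyMeasurable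
      · filter_upwards with ω
        have h1 := hPle t ω (g t ω)
        have hsq := pow_le_pow_left₀ (norm_nonneg _) h1 2
        rw [Real.norm_eq_abs, abs_of_nonneg (sq_nonneg _)]
        nlinarith
    have hinnercont : Continuous (fun p : EuclideanSpace ℝ (Fin d) × EuclideanSpace ℝ (Fin d) =>
        (inner ℝ p.1 p.2 : ℝ)) := continuous_inner
    have iInner1 : Integrable (fun ω => ⟪gradient 𝓛 (θ t ω),
        g t ω + lam • (IG t ω) (g t ω)⟫) μ := by
      refine Integrable.mono' ((((hInt t).2).add (hg2 t)).const_mul (C / 2)) ?_ ?_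
      · exact (hinnercont.comp_stronglyMeasurable
          (((hnab t).mono (ℱ.le t)).prodMk (hPgmeas.mono (ℱ.le (t + 1))))).aestronglyMeasurable
      · filter_upwards with ω
        have h1 := abs_real_inner_le_norm (gradient 𝓛 (θ t ω)) (g t ω + lam • (IG t ω) (g t ω))
        have h2 := hPle t ω (g t ω)
        rw [Real.norm_eq_abs]
        simp only [Pi.add_apply]
        nlinarith [norm_nonneg (gradient 𝓛 (θ t ω)), norm_nonneg (g t ω),
          sq_nonneg (‖gradient 𝓛 (θ t ω)‖ - ‖g t ω‖), mul_nonneg hC0.le (norm_nonneg (g t ω)),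
          sq_nonneg (‖gradient 𝓛 (θ t ω)‖ - C * ‖g t ω‖)]
    have iInnerXnb : Integrable (fun ω => ⟪gradient 𝓛 (θ t ω) + lam • (IG t ω)
        (gradient 𝓛 (θ t ω)), gradient 𝓛 (θ t ω)⟫) μ := by
      refine Integrable.mono' (((hInt t).2).const_mul C) ?_ ?_
      · exact (hinnercont.comp_stronglyMeasurable
          (((hXmeas.mono (ℱ.le t))).prodMk ((hnab t).mono (ℱ.le t)))).aestronglyMeasurable
      · filter_upwards with ω
        have h1 := abs_real_inner_le_norm (gradient 𝓛 (θ t ω) + lam • (IG t ω)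
          (gradient 𝓛 (θ t ω))) (gradient 𝓛 (θ t ω))
        have h2 := hPle t ω (gradient 𝓛 (θ t ω))
        rw [Real.norm_eq_abs]
        nlinarith [norm_nonneg (gradient 𝓛 (θ t ω))]
    have iInnerXh : Integrable (fun ω => ⟪gradient 𝓛 (θ t ω) + lam • (IG t ω)
        (gradient 𝓛 (θ t ω)), g t ω - gradient 𝓛 (θ t ω)⟫) μ := by
      refine Integrable.mono' (((((hInt t).2).const_mul (C ^ 2)).add (hvar_int t)).const_mul
        (1 / 2)) ?_ ?_
      · exact (hinnercont.comp_stronglyMeasurable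
          (((hXmeas.mono (ℱ.le t))).prodMk (hh.1.stronglyMeasurable_mk))).aestronglyMeasurable.congr
          (by filter_upwards [hh.1.ae_eq_mk] with ω hω; rw [← hω])
      · filter_upwards with ω
        have h1 := abs_real_inner_le_norm (gradient 𝓛 (θ t ω) + lam • (IG t ω)
          (gradient 𝓛 (θ t ω))) (g t ω - gradient 𝓛 (θ t ω))
        have h2 := hPle t ω (gradient 𝓛 (θ t ω))
        rw [Real.norm_eq_abs]
        simp only [Pi.add_apply]
        have h3 := mul_le_mul_of_nonneg_right h2 (norm_nonneg (g t ω - gradient 𝓛 (θ t ω)))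
        have h4 : 2 * (C * ‖gradient 𝓛 (θ t ω)‖ * ‖g t ω - gradient 𝓛 (θ t ω)‖)
            ≤ C ^ 2 * ‖gradient 𝓛 (θ t ω)‖ ^ 2 + ‖g t ω - gradient 𝓛 (θ t ω)‖ ^ 2 := by
          nlinarith [sq_nonneg (C * ‖gradient 𝓛 (θ t ω)‖ - ‖g t ω - gradient 𝓛 (θ t ω)‖)]
        linarith only [h1.trans h3, h4]
    have iInnerNbh : Integrable (fun ω => ⟪gradient 𝓛 (θ t ω),
        g t ω - gradient 𝓛 (θ t ω)⟫) μ := by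
      refine Integrable.mono' ((((hInt t).2).add (hvar_int t)).const_mul (1 / 2)) ?_ ?_
      · exact (hinnercont.comp_stronglyMeasurable
          ((((hnab t).mono (ℱ.le t))).prodMk (hh.1.stronglyMeasurable_mk))).aestronglyMeasurable.congr
          (by filter_upwards [hh.1.ae_eq_mk] with ω hω; rw [← hω])
      · filter_upwards with ω
        have h1 := abs_real_inner_le_norm (gradient 𝓛 (θ t ω)) (g t ω - gradient 𝓛 (θ t ω))
        rw [Real.norm_eq_abs]
        simp only [Pi.add_apply]
        nlinarith [norm_nonneg (g t ω - gradient 𝓛 (θ t ω)), norm_nonneg (gradient 𝓛 (θ t ω)),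
          sq_nonneg (‖gradient 𝓛 (θ t ω)‖ - ‖g t ω - gradient 𝓛 (θ t ω)‖)]
    -- pointwise algebraic identities
    have hswap : ∀ ω, ⟪gradient 𝓛 (θ t ω), g t ω + lam • (IG t ω) (g t ω)⟫
        = ⟪gradient 𝓛 (θ t ω) + lam • (IG t ω) (gradient 𝓛 (θ t ω)), gradient 𝓛 (θ t ω)⟫
          + ⟪gradient 𝓛 (θ t ω) + lam • (IG t ω) (gradient 𝓛 (θ t ω)),
            g t ω - gradient 𝓛 (θ t ω)⟫ := by
      intro ω
      have hsymm := hIG_symm t ω (gradient 𝓛 (θ t ω)) (g t ω)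
      simp only [inner_add_right, inner_add_left, inner_sub_right, real_inner_smul_left,
        real_inner_smul_right]
      have hsymm' : lam * ⟪(IG t ω) (gradient 𝓛 (θ t ω)), g t ω⟫
          = lam * ⟪gradient 𝓛 (θ t ω), (IG t ω) (g t ω)⟫ := by rw [hsymm]
      linarith [hsymm']
    have hlow : ∀ ω, ‖gradient 𝓛 (θ t ω)‖ ^ 2
        ≤ ⟪gradient 𝓛 (θ t ω) + lam • (IG t ω) (gradient 𝓛 (θ t ω)), gradient 𝓛 (θ t ω)⟫ := by
      intro ω
      rw [inner_add_left, real_inner_smul_left, real_inner_self_eq_norm_sq]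
      nlinarith [mul_nonneg hlam (hIG_psd t ω (gradient 𝓛 (θ t ω)))]
    have hsm1 : ∀ ω, 𝓛 (θ (t + 1) ω) ≤ 𝓛 (θ t ω)
        - η * ⟪gradient 𝓛 (θ t ω), g t ω + lam • (IG t ω) (g t ω)⟫
        + L / 2 * (η ^ 2 * ‖g t ω + lam • (IG t ω) (g t ω)‖ ^ 2) := by
      intro ω
      have hd := fire_descent 𝓛 L hdiff hsmooth (θ t ω)
        (-(η • (g t ω + lam • (IG t ω) (g t ω))))
      have e : θ t ω + -(η • (g t ω + lam • (IG t ω) (g t ω))) = θ (t + 1) ω := by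
        rw [hupdate t ω, sub_eq_add_neg]
      rw [e, inner_neg_right, real_inner_smul_right, norm_neg, norm_smul, Real.norm_eq_abs,
        abs_of_pos hη, mul_pow] at hd
      linarith
    -- integrate the one-step inequality
    have hInt1 : ∫ ω, 𝓛 (θ (t + 1) ω) ∂μ ≤ ∫ ω, 𝓛 (θ t ω) ∂μ
        - η * ∫ ω, ⟪gradient 𝓛 (θ t ω), g t ω + lam • (IG t ω) (g t ω)⟫ ∂μ
        + L / 2 * (η ^ 2 * ∫ ω, ‖g t ω + lam • (IG t ω) (g t ω)‖ ^ 2 ∂μ) := by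
      have i1 : Integrable (fun ω => 𝓛 (θ t ω)
          - η * ⟪gradient 𝓛 (θ t ω), g t ω + lam • (IG t ω) (g t ω)⟫) μ :=
        (hIL t).sub (iInner1.const_mul η)
      have i2 : Integrable (fun ω =>
          L / 2 * (η ^ 2 * ‖g t ω + lam • (IG t ω) (g t ω)‖ ^ 2)) μ :=
        (iPg2.const_mul (η ^ 2)).const_mul (L / 2)
      have irhs : Integrable (fun ω => 𝓛 (θ t ω)
          - η * ⟪gradient 𝓛 (θ t ω), g t ω + lam • (IG t ω) (g t ω)⟫
          + L / 2 * (η ^ 2 * ‖g t ω + lam • (IG t ω) (g t ω)‖ ^ 2)) μ := i1.add i2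
      have h1 := integral_mono (hIL (t + 1)) irhs hsm1
      rw [integral_add i1 i2, integral_sub (hIL t) (iInner1.const_mul η),
        integral_const_mul, integral_const_mul, integral_const_mul] at h1
      exact h1
    -- bound the linear term from below
    have hBlow : ∫ ω, ‖gradient 𝓛 (θ t ω)‖ ^ 2 ∂μ
        ≤ ∫ ω, ⟪gradient 𝓛 (θ t ω), g t ω + lam • (IG t ω) (g t ω)⟫ ∂μ := by
      rw [integral_congr_ae (Filter.Eventually.of_forall hswap),
        integral_add iInnerXnb iInnerXh, ortho2, add_zero]
      exact integral_mono (hInt t).2 iInnerXnb hlow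
    -- bound the quadratic term from above
    have hg2exp : ∫ ω, ‖g t ω‖ ^ 2 ∂μ
        ≤ ∫ ω, ‖gradient 𝓛 (θ t ω)‖ ^ 2 ∂μ + σ ^ 2 := by
      have hptg : ∀ ω, ‖g t ω‖ ^ 2 = ‖gradient 𝓛 (θ t ω)‖ ^ 2
          + 2 * ⟪gradient 𝓛 (θ t ω), g t ω - gradient 𝓛 (θ t ω)⟫
          + ‖g t ω - gradient 𝓛 (θ t ω)‖ ^ 2 := by
        intro ω
        have hns := norm_add_sq_real (gradient 𝓛 (θ t ω)) (g t ω - gradient 𝓛 (θ t ω))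
        rw [show gradient 𝓛 (θ t ω) + (g t ω - gradient 𝓛 (θ t ω)) = g t ω from by abel] at hns
        exact hns
      have j1 : Integrable (fun ω => ‖gradient 𝓛 (θ t ω)‖ ^ 2
          + 2 * ⟪gradient 𝓛 (θ t ω), g t ω - gradient 𝓛 (θ t ω)⟫) μ :=
        ((hInt t).2).add (iInnerNbh.const_mul 2)
      rw [integral_congr_ae (Filter.Eventually.of_forall hptg),
        integral_add j1 (hvar_int t),
        integral_add (hInt t).2 (iInnerNbh.const_mul 2), integral_const_mul, ortho1,
        mul_zero, add_zero]
      have := hvarI t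
      linarith
    have hPg2exp : ∫ ω, ‖g t ω + lam • (IG t ω) (g t ω)‖ ^ 2 ∂μ
        ≤ C ^ 2 * (∫ ω, ‖gradient 𝓛 (θ t ω)‖ ^ 2 ∂μ + σ ^ 2) := by
      have h1 : ∫ ω, ‖g t ω + lam • (IG t ω) (g t ω)‖ ^ 2 ∂μ
          ≤ ∫ ω, C ^ 2 * ‖g t ω‖ ^ 2 ∂μ := by
        refine integral_mono iPg2 ((hg2 t).const_mul (C ^ 2)) fun ω => ?_
        have h2 := hPle t ω (g t ω)
        have hsq := pow_le_pow_left₀ (norm_nonneg _) h2 2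
        nlinarith
      rw [integral_const_mul] at h1
      nlinarith [sq_nonneg C]
    -- put everything together
    have hA0 : 0 ≤ ∫ ω, ‖gradient 𝓛 (θ t ω)‖ ^ 2 ∂μ :=
      integral_nonneg fun ω => sq_nonneg _
    have hq : L * η ^ 2 * C ^ 2 ≤ η := by nlinarith
    have hs0 : (0:ℝ) ≤ σ ^ 2 := sq_nonneg σ
    have e1 : L / 2 * η ^ 2 * ∫ ω, ‖g t ω + lam • (IG t ω) (g t ω)‖ ^ 2 ∂μ
        ≤ L / 2 * η ^ 2 * (C ^ 2 * (∫ ω, ‖gradient 𝓛 (θ t ω)‖ ^ 2 ∂μ + σ ^ 2)) :=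
      mul_le_mul_of_nonneg_left hPg2exp (by positivity)
    have e2 : η * ∫ ω, ‖gradient 𝓛 (θ t ω)‖ ^ 2 ∂μ
        ≤ η * ∫ ω, ⟪gradient 𝓛 (θ t ω), g t ω + lam • (IG t ω) (g t ω)⟫ ∂μ :=
      mul_le_mul_of_nonneg_left hBlow hη.le
    have e3 : L * η ^ 2 * C ^ 2 * ∫ ω, ‖gradient 𝓛 (θ t ω)‖ ^ 2 ∂μ
        ≤ η * ∫ ω, ‖gradient 𝓛 (θ t ω)‖ ^ 2 ∂μ :=
      mul_le_mul_of_nonneg_right hq hA0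
    have e4 : L / 2 * η ^ 2 * (C ^ 2 * σ ^ 2) ≤ η ^ 2 * L * C ^ 2 / 2 * σ ^ 2 := by nlinarith
    have f5 : ∫ ω, 𝓛 (θ (t + 1) ω) ∂μ ≤ ∫ ω, 𝓛 (θ t ω) ∂μ
        - η * ∫ ω, ‖gradient 𝓛 (θ t ω)‖ ^ 2 ∂μ
        + L / 2 * (η ^ 2 * ∫ ω, ‖g t ω + lam • (IG t ω) (g t ω)‖ ^ 2 ∂μ) := by
      linarith only [hInt1, e2]
    have f6 : L / 2 * (η ^ 2 * ∫ ω, ‖g t ω + lam • (IG t ω) (g t ω)‖ ^ 2 ∂μ)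
        ≤ L / 2 * η ^ 2 * (C ^ 2 * (∫ ω, ‖gradient 𝓛 (θ t ω)‖ ^ 2 ∂μ + σ ^ 2)) := by
      linarith only [e1]
    have f7 : L / 2 * η ^ 2 * (C ^ 2 * (∫ ω, ‖gradient 𝓛 (θ t ω)‖ ^ 2 ∂μ + σ ^ 2))
        ≤ η / 2 * ∫ ω, ‖gradient 𝓛 (θ t ω)‖ ^ 2 ∂μ + η ^ 2 * L * C ^ 2 / 2 * σ ^ 2 := by
      linarith only [e3, e4]
    linarith only [f5, f6, f7, e2]
  -- telescoping
  have htel : ∀ T : ℕ, ∫ ω, 𝓛 (θ T ω) ∂μ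
      + η / 2 * ∑ t ∈ Finset.range T, ∫ ω, ‖gradient 𝓛 (θ t ω)‖ ^ 2 ∂μ
      ≤ 𝓛 θ0 + T * (η ^ 2 * L * C ^ 2 / 2 * σ ^ 2) := by
    intro T
    induction T with
    | zero =>
      simp only [Finset.range_zero, Finset.sum_empty, Nat.cast_zero, zero_mul, mul_zero]
      rw [hθ0]
      simp [integral_const]
    | succ T ih =>
      rw [Finset.sum_range_succ]
      have h1 := hstep T
      push_cast
      nlinarith [integral_nonneg (fun ω => sq_nonneg (‖gradient 𝓛 (θ T ω)‖)) (μ := μ)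
        (f := fun ω => ‖gradient 𝓛 (θ T ω)‖ ^ 2)]
  -- conclusion
  intro T hT
  rw [show (1 + lam * G) = C from hCdef.symm]
  have hT0 : (0 : ℝ) < T := by exact_mod_cast hT
  set A : ℝ := ∑ t ∈ Finset.range T, ∫ ω, ‖gradient 𝓛 (θ t ω)‖ ^ 2 ∂μ with hAdef
  have hLB : Lstar ≤ ∫ ω, 𝓛 (θ T ω) ∂μ := by
    have : ∫ ω, 𝓛 (θ T ω) ∂μ ≥ ∫ (_ : Ω), Lstar ∂μ :=
      integral_mono (integrable_const _) (hIL T) fun ω => hbdd _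
    simpa [integral_const] using this
  have hA : η / 2 * A ≤ (𝓛 θ0 - Lstar) + T * (η ^ 2 * L * C ^ 2 / 2 * σ ^ 2) := by
    have := htel T
    linarith
  calc (1 / (T : ℝ)) * A = (η / 2 * A) * (2 / (η * T)) := by
        field_simp
    _ ≤ ((𝓛 θ0 - Lstar) + T * (η ^ 2 * L * C ^ 2 / 2 * σ ^ 2)) * (2 / (η * T)) := by
        apply mul_le_mul_of_nonneg_right hA
        positivity
    _ = 2 * (𝓛 θ0 - Lstar) / (η * T) + η * L * C ^ 2 * σ ^ 2 := by
        field_simp
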